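/- If C ⊆ ℝ^n is a compact convex polytope containing 0, then the end set es(C) is closed and es(C) = ⋃_{w : σ_C(w) > 0} argmax_{v ∈ C} ⟨v, w⟩. -/

import Mathlib

open Set Metric Filter
open scoped RealInnerProductSpace

open Finset

set_option linter.unusedSectionVars false
variable {V : Type*} [NormedAddCommGroup V] [InnerProductSpace ℝ V] [FiniteDimensional ℝ V]

/-- The cone generated by a finite set. -/
def coneOf (B : Finset V) : Set V :=
  {x | ∃ lam : V → ℝ, (∀ b ∈ B, 0 ≤ lam b) ∧ ∑ b ∈ B, lam b • b = x}

lemma coneOf_mono {S B : Finset V} (h : S ⊆ B) : coneOf S ⊆ coneOf B := by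
  classical
  rintro x ⟨lam, h0, hs⟩
  refine ⟨fun v => if v ∈ S then lam v else 0, ?_, ?_⟩
  · intro b _
    by_cases hb : b ∈ S
    · simpa [hb] using h0 b hb
    · simp [hb]
  · rw [← hs, ← Finset.sum_subset h (fun b _ hb => by simp [hb])]
    exact Finset.sum_congr rfl fun b hb => by simp [hb]

lemma zero_mem_coneOf (B : Finset V) : (0 : V) ∈ coneOf B :=
  ⟨0, fun _ _ => le_refl _, by simp⟩

lemma smul_mem_coneOf {B : Finset V} {x : V} (hx : x ∈ coneOf B) {t : ℝ} (ht : 0 ≤ t) :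
    t • x ∈ coneOf B := by
  obtain ⟨lam, h0, hs⟩ := hx
  refine ⟨fun v => t * lam v, fun b hb => mul_nonneg ht (h0 b hb), ?_⟩
  rw [← hs, Finset.smul_sum]
  exact Finset.sum_congr rfl fun b _ => by rw [mul_smul]

lemma convex_coneOf (B : Finset V) : Convex ℝ (coneOf B) := by
  rintro x ⟨lam, hl0, hls⟩ y ⟨mu, hm0, hms⟩ a b ha hb _
  refine ⟨fun v => a * lam v + b * mu v, fun v hv =>
    add_nonneg (mul_nonneg ha (hl0 v hv)) (mul_nonneg hb (hm0 v hv)), ?_⟩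
  simp only [add_smul, mul_smul, Finset.sum_add_distrib, ← Finset.smul_sum, hls, hms]

lemma coneOf_caratheodory (B : Finset V) :
    ∀ x ∈ coneOf B, ∃ S : Finset V, S ⊆ B ∧
      LinearIndependent ℝ (fun i : {v : V // v ∈ S} => (i : V)) ∧ x ∈ coneOf S := by
  classical
  induction B using Finset.strongInductionOn with
  | _ B IH =>
    intro x hx
    by_cases hind : LinearIndependent ℝ (fun i : {v : V // v ∈ B} => (i : V))
    · exact ⟨B, Finset.Subset.refl _, hind, hx⟩
    obtain ⟨lam, hl0, hls⟩ := hx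
    obtain ⟨g, hg0, i0, hgi0⟩ := Fintype.not_linearIndependent_iff.mp hind
    -- extend (±g) to a function c on V with a positive value somewhere on B
    obtain ⟨c, hcs, b1, hb1, hcb1⟩ :
        ∃ c : V → ℝ, (∑ b ∈ B, c b • b = 0) ∧ ∃ b1 ∈ B, 0 < c b1 := by
      rcases lt_or_gt_of_ne hgi0 with h | h
      · refine ⟨fun v => if hv : v ∈ B then -g ⟨v, hv⟩ else 0, ?_, (i0 : V), i0.2, ?_⟩
        · rw [← Finset.sum_coe_sort B (fun v => (if hv : v ∈ B then -g ⟨v, hv⟩ else 0) • v)]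
          rw [← neg_eq_zero, ← Finset.sum_neg_distrib]
          rw [← hg0]
          refine Finset.sum_congr rfl fun i _ => ?_
          simp [i.2]
        · simpa [i0.2] using h
      · refine ⟨fun v => if hv : v ∈ B then g ⟨v, hv⟩ else 0, ?_, (i0 : V), i0.2, ?_⟩
        · rw [← Finset.sum_coe_sort B (fun v => (if hv : v ∈ B then g ⟨v, hv⟩ else 0) • v)]
          rw [← hg0]
          refine Finset.sum_congr rfl fun i _ => ?_
          simp [i.2]
        · simpa [i0.2] using h
    -- minimize lam b / c b over positive coordinates of c
    have hPne : ({b ∈ B | 0 < c b} : Finset V).Nonempty := ⟨b1, by simp [hb1, hcb1]⟩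
    obtain ⟨b0, hb0P, hb0min⟩ := Finset.exists_min_image _ (fun b => lam b / c b) hPne
    rw [Finset.mem_filter] at hb0P
    obtain ⟨hb0B, hcb0⟩ := hb0P
    set t : ℝ := lam b0 / c b0 with ht
    have ht0 : 0 ≤ t := div_nonneg (hl0 b0 hb0B) hcb0.le
    set lam' : V → ℝ := fun b => lam b - t * c b with hlam'
    have hlam'0 : ∀ b ∈ B, 0 ≤ lam' b := by
      intro b hb
      by_cases hcb : 0 < c b
      · have := hb0min b (Finset.mem_filter.mpr ⟨hb, hcb⟩)
        have : t * c b ≤ (lam b / c b) * c b := by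
          exact mul_le_mul_of_nonneg_right this hcb.le
        rw [div_mul_cancel₀ _ hcb.ne'] at this
        simp only [hlam', sub_nonneg]; exact this
      · have : t * c b ≤ 0 := mul_nonpos_of_nonneg_of_nonpos ht0 (not_lt.mp hcb)
        have := sub_nonneg.mpr this
        simp only [hlam']
        nlinarith [hl0 b hb]
    have hlam'b0 : lam' b0 = 0 := by
      simp only [hlam', ht, div_mul_cancel₀ _ hcb0.ne', sub_self]
    have hsum' : ∑ b ∈ B, lam' b • b = x := by
      simp only [hlam', sub_smul, mul_smul, Finset.sum_sub_distrib, hls, ← Finset.smul_sum, hcs,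
        smul_zero, sub_zero]
    have hxe : x ∈ coneOf (B.erase b0) := by
      refine ⟨lam', fun b hb => hlam'0 b (Finset.mem_of_mem_erase hb), ?_⟩
      rw [Finset.sum_erase _ (by rw [hlam'b0, zero_smul])]
      exact hsum'
    obtain ⟨S, hSsub, hSind, hxS⟩ := IH _ (Finset.erase_ssubset hb0B) x hxe
    exact ⟨S, hSsub.trans (Finset.erase_subset _ _), hSind, hxS⟩

lemma isClosed_coneOf_of_linearIndependent {S : Finset V}
    (hS : LinearIndependent ℝ (fun i : {v : V // v ∈ S} => (i : V))) :
    IsClosed (coneOf S) := by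
  classical
  let L : ({v : V // v ∈ S} → ℝ) →ₗ[ℝ] V :=
    { toFun := fun c => ∑ i, c i • (i : V)
      map_add' := by intro c d; simp [add_smul, Finset.sum_add_distrib]
      map_smul' := by intro r c; simp [Finset.smul_sum, mul_smul] }
  have hker : LinearMap.ker L = ⊥ := by
    rw [LinearMap.ker_eq_bot']
    intro c hc
    funext i
    exact Fintype.linearIndependent_iff.mp hS c hc i
  have hemb := L.isClosedEmbedding_of_injective hker
  have himg : coneOf S = L '' {c | ∀ i, 0 ≤ c i} := by
    ext x
    constructor
    · rintro ⟨lam, hl0, hls⟩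
      refine ⟨fun i => lam i, fun i => hl0 i i.2, ?_⟩
      show (∑ i : {v : V // v ∈ S}, lam i • (i : V)) = x
      rw [Finset.sum_coe_sort S (fun v => lam v • v)]
      exact hls
    · rintro ⟨c, hc0, rfl⟩
      refine ⟨fun v => if hv : v ∈ S then c ⟨v, hv⟩ else 0, ?_, ?_⟩
      · intro b hb; simpa [hb] using hc0 ⟨b, hb⟩
      · rw [← Finset.sum_coe_sort S (fun v => (if hv : v ∈ S then c ⟨v, hv⟩ else 0) • v)]
        exact Finset.sum_congr rfl fun i _ => by simp [i.2]
  rw [himg]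
  refine hemb.isClosedMap _ ?_
  have : {c : {v : V // v ∈ S} → ℝ | ∀ i, 0 ≤ c i} = ⋂ i, {c | 0 ≤ c i} := by
    ext c; simp [Set.mem_iInter]
  rw [this]
  exact isClosed_iInter fun i => isClosed_le continuous_const (continuous_apply i)

lemma isClosed_coneOf (B : Finset V) : IsClosed (coneOf B) := by
  classical
  have : coneOf B = ⋃ S ∈ {S : Finset V | S ⊆ B ∧
      LinearIndependent ℝ (fun i : {v : V // v ∈ S} => (i : V))}, coneOf S := by
    apply Set.Subset.antisymm
    · intro x hx
      obtain ⟨S, hSB, hSind, hxS⟩ := coneOf_caratheodory B x hx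
      exact Set.mem_biUnion ⟨hSB, hSind⟩ hxS
    · exact Set.iUnion₂_subset fun S hS => coneOf_mono hS.1
  rw [this]
  refine Set.Finite.isClosed_biUnion ?_ fun S hS => isClosed_coneOf_of_linearIndependent hS.2
  exact Set.Finite.subset (B.powerset.finite_toSet) fun S hS => by
    simpa [Finset.mem_powerset] using hS.1

open scoped RealInnerProductSpace

lemma coneOf_self_mem {B : Finset V} {b : V} (hb : b ∈ B) : b ∈ coneOf B := by
  classical
  refine ⟨fun v => if v = b then 1 else 0, fun v _ => by positivity, ?_⟩
  have : ∀ v ∈ B, (if v = b then (1 : ℝ) else 0) • v = if v = b then v else 0 := by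
    intro v _; split <;> simp
  rw [Finset.sum_congr rfl this, Finset.sum_ite_eq' B b (fun v => v)]
  simp [hb]

lemma coneOf_separation {B : Finset V} {x : V} (hx : x ∉ coneOf B) :
    ∃ w : V, (∀ y ∈ coneOf B, ⟪y, w⟫ ≤ 0) ∧ 0 < ⟪x, w⟫ := by
  obtain ⟨f, u, hfs, hux⟩ :=
    geometric_hahn_banach_closed_point (convex_coneOf B) (isClosed_coneOf B) hx
  have hu0 : 0 < u := by simpa using hfs 0 (zero_mem_coneOf B)
  have hle : ∀ y ∈ coneOf B, f y ≤ 0 := by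
    intro y hy
    by_contra h
    push_neg at h
    have hy' := smul_mem_coneOf hy (le_of_lt (div_pos hu0 h))
    have h2 := hfs _ hy'
    rw [map_smul, smul_eq_mul, div_mul_cancel₀ _ h.ne'] at h2
    exact lt_irrefl u h2
  refine ⟨(InnerProductSpace.toDual ℝ V).symm f, ?_, ?_⟩
  · intro y hy
    rw [real_inner_comm, InnerProductSpace.toDual_symm_apply]
    exact hle y hy
  · rw [real_inner_comm, InnerProductSpace.toDual_symm_apply]
    exact hu0.trans hux

/-- Key lemma: a point of the polytope whose multiples `t • x`, `t > 1`, all lie outside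
admits a supporting functional with positive value at `x`. -/
lemma exists_support {A C : Set V} (hA : A.Finite) (hC : C = convexHull ℝ A)
    (h0 : (0 : V) ∈ C) {x : V} (hx : x ∈ C) (hend : ∀ t : ℝ, 1 < t → t • x ∉ C) :
    ∃ w : V, 0 < ⟪x, w⟫ ∧ ∀ u ∈ C, ⟪u, w⟫ ≤ ⟪x, w⟫ := by
  classical
  have hx0 : x ≠ 0 := by
    rintro rfl
    exact hend 2 one_lt_two (by simpa using h0)
  set B : Finset V := hA.toFinset.image (fun a => a - x) with hB
  have hxK : x ∉ coneOf B := by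
    rintro ⟨lam, hl0, hls⟩
    rw [hB, Finset.sum_image (fun a _ a' _ h => by simpa using sub_left_injective h)] at hls
    set μ : V → ℝ := fun a => lam (a - x) with hμ
    have hμ0 : ∀ a ∈ hA.toFinset, 0 ≤ μ a := fun a ha =>
      hl0 _ (Finset.mem_image_of_mem _ ha)
    set s : ℝ := ∑ a ∈ hA.toFinset, μ a with hs
    have hs0 : 0 ≤ s := Finset.sum_nonneg hμ0
    have hkey : ∑ a ∈ hA.toFinset, μ a • a = (1 + s) • x := by
      have : ∑ a ∈ hA.toFinset, μ a • (a - x)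
          = ∑ a ∈ hA.toFinset, μ a • a - s • x := by
        simp [smul_sub, Finset.sum_sub_distrib, ← Finset.sum_smul, hs]
      rw [this] at hls
      rw [add_smul, one_smul]
      linear_combination (norm := module) hls
    rcases eq_or_lt_of_le hs0 with hseq | hspos
    · have hall : ∀ a ∈ hA.toFinset, μ a = 0 :=
        (Finset.sum_eq_zero_iff_of_nonneg hμ0).mp hseq.symm
      have : (1 + s) • x = 0 := by
        rw [← hkey]
        exact Finset.sum_eq_zero fun a ha => by rw [hall a ha, zero_smul]
      rw [← hseq, add_zero, one_smul] at this
      exact hx0 this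
    · have ht1 : (1 : ℝ) < (1 + s) / s := by
        rw [lt_div_iff₀ hspos]; linarith
      apply hend _ ht1
      have hmem := Finset.centerMass_mem_convexHull hA.toFinset hμ0
        (by rw [← hs]; exact hspos) (fun a ha => Finset.mem_coe.mpr ha)
      rw [hA.coe_toFinset, ← hC] at hmem
      have : (hA.toFinset.centerMass μ fun a => a) = ((1 + s) / s) • x := by
        rw [Finset.centerMass, ← hs]
        simp only [id_eq, hkey, smul_smul]
        rw [div_eq_inv_mul]
      rwa [this] at hmem
  obtain ⟨w, hw1, hw2⟩ := coneOf_separation hxK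
  refine ⟨w, hw2, ?_⟩
  have hsub : C ⊆ {u | ⟪u, w⟫ ≤ ⟪x, w⟫} := by
    rw [hC]
    apply convexHull_min
    · intro a ha
      have := hw1 _ (coneOf_self_mem (Finset.mem_image_of_mem (fun a => a - x)
        (hA.mem_toFinset.mpr ha)))
      rw [inner_sub_left] at this
      simpa using this
    · exact convex_halfSpace_le ⟨fun a b => inner_add_left a b w,
        fun r a => real_inner_smul_left a w r⟩ _
  exact fun u hu => hsub hu

/-- For a polytope containing 0, the end set is closed and equals the union of
argmax sets over directions with positive support value. -/
theorem polytope_end_set_closed_eq_S {n : ℕ} (A C : Set (EuclideanSpace ℝ (Fin n)))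
    (hA : A.Finite) (hC : C = convexHull ℝ A)
    (h0 : (0 : EuclideanSpace ℝ (Fin n)) ∈ C) :
    IsClosed {x ∈ C | ∀ t : ℝ, 1 < t → t • x ∉ C} ∧
    {x ∈ C | ∀ t : ℝ, 1 < t → t • x ∉ C} =
      ⋃ w ∈ {w : EuclideanSpace ℝ (Fin n) | 0 < sSup ((fun v => ⟪v, w⟫) '' C)},
        {v ∈ C | ∀ u ∈ C, ⟪u, w⟫ ≤ ⟪v, w⟫} := by
  classical
  set RHS : Set (EuclideanSpace ℝ (Fin n)) :=
    ⋃ w ∈ {w : EuclideanSpace ℝ (Fin n) | 0 < sSup ((fun v => ⟪v, w⟫) '' C)},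
      {v ∈ C | ∀ u ∈ C, ⟪u, w⟫ ≤ ⟪v, w⟫} with hRHS
  have heq : {x ∈ C | ∀ t : ℝ, 1 < t → t • x ∉ C} = RHS := by
    ext x
    simp only [hRHS, Set.mem_setOf_eq, Set.mem_iUnion, exists_prop]
    constructor
    · rintro ⟨hxC, hend⟩
      obtain ⟨w, hpos, hsupp⟩ := exists_support hA hC h0 hxC hend
      have hbdd : BddAbove ((fun v => ⟪v, w⟫) '' C) := by
        refine ⟨⟪x, w⟫, ?_⟩
        rintro y ⟨u, hu, rfl⟩
        exact hsupp u hu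
      exact ⟨w, hpos.trans_le (le_csSup hbdd (Set.mem_image_of_mem _ hxC)), hxC, hsupp⟩
    · rintro ⟨w, hwpos, hvC, hmax⟩
      refine ⟨hvC, fun t ht htC => ?_⟩
      have h1 : ⟪t • x, w⟫ ≤ ⟪x, w⟫ := hmax _ htC
      rw [real_inner_smul_left] at h1
      have h3 : sSup ((fun v => ⟪v, w⟫) '' C) ≤ ⟪x, w⟫ :=
        csSup_le ⟨_, Set.mem_image_of_mem _ h0⟩ (by rintro y ⟨u, hu, rfl⟩; exact hmax u hu)
      nlinarith
  have hAne : A.Nonempty := by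
    by_contra h
    rw [Set.not_nonempty_iff_eq_empty] at h
    rw [h, convexHull_empty] at hC
    rw [hC] at h0
    exact h0
  have hclosed : IsClosed RHS := by
    have hrep : RHS = ⋃ S ∈ {S : Set (EuclideanSpace ℝ (Fin n)) | S ⊆ A ∧ convexHull ℝ S ⊆ RHS},
        convexHull ℝ S := by
      apply Set.Subset.antisymm
      · intro v hv
        rw [hRHS] at hv
        obtain ⟨w, hw, hvC, hmax⟩ := by simpa only [Set.mem_iUnion, exists_prop,
          Set.mem_setOf_eq] using hv
        -- the max of ⟪·, w⟫ over A
        obtain ⟨a0, ha0A, ha0max⟩ := Finset.exists_max_image hA.toFinset (fun a => ⟪a, w⟫)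
          (by rwa [← Set.Finite.toFinset_nonempty hA] at hAne)
        set m : ℝ := ⟪a0, w⟫ with hm
        have hCb : ∀ u ∈ C, ⟪u, w⟫ ≤ m := by
          rw [hC]
          intro u hu
          refine convexHull_min (fun a ha => ha0max a (hA.mem_toFinset.mpr ha)) ?_ hu
          exact convex_halfSpace_le (f := fun u => ⟪u, w⟫) ⟨fun a b => inner_add_left a b w,
            fun r a => real_inner_smul_left a w r⟩ _
        have ha0C : a0 ∈ C := by
          rw [hC]
          exact subset_convexHull ℝ A (hA.mem_toFinset.mp ha0A)
        have hvm : ⟪v, w⟫ = m := le_antisymm (hCb v hvC) (hmax a0 ha0C)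
        set S : Set (EuclideanSpace ℝ (Fin n)) := {a ∈ A | ⟪a, w⟫ = m} with hS
        have hSsub : convexHull ℝ S ⊆ {v' ∈ C | ∀ u ∈ C, ⟪u, w⟫ ≤ ⟪v', w⟫} := by
          intro u hu
          have huC : u ∈ C := by
            rw [hC]; exact convexHull_mono (fun a ha => ha.1) hu
          have hum : ⟪u, w⟫ = m := by
            have hconv : Convex ℝ {u' : EuclideanSpace ℝ (Fin n) | ⟪u', w⟫ = m} := by
              have : {u' : EuclideanSpace ℝ (Fin n) | ⟪u', w⟫ = m} =
                  {u' | ⟪u', w⟫ ≤ m} ∩ {u' | m ≤ ⟪u', w⟫} := by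
                ext u'; simp [le_antisymm_iff]
              rw [this]
              exact (convex_halfSpace_le ⟨fun a b => inner_add_left a b w,
                fun r a => real_inner_smul_left a w r⟩ _).inter
                (convex_halfSpace_ge ⟨fun a b => inner_add_left a b w,
                fun r a => real_inner_smul_left a w r⟩ _)
            exact convexHull_min (fun a ha => ha.2) hconv hu
          exact ⟨huC, fun u' hu' => (hCb u' hu').trans_eq hum.symm⟩
        have hSRHS : convexHull ℝ S ⊆ RHS := by
          intro u hu
          rw [hRHS]
          exact Set.mem_biUnion hw (hSsub hu)
        -- v ∈ convexHull ℝ S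
        have hvS : v ∈ convexHull ℝ S := by
          have hvA : v ∈ convexHull ℝ (↑hA.toFinset : Set (EuclideanSpace ℝ (Fin n))) := by
            rw [hA.coe_toFinset, ← hC]; exact hvC
          rw [Finset.convexHull_eq] at hvA
          obtain ⟨μ, hμ0, hμ1, hμc⟩ := hvA
          have hvsum : v = ∑ a ∈ hA.toFinset, μ a • a := by
            rw [← hμc, Finset.centerMass_eq_of_sum_1 _ id hμ1]
            rfl
          have hinner : ⟪v, w⟫ = ∑ a ∈ hA.toFinset, μ a * ⟪a, w⟫ := by
            rw [hvsum, sum_inner]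
            exact Finset.sum_congr rfl fun a _ => real_inner_smul_left a w (μ a)
          have hzero : ∀ a ∈ hA.toFinset, μ a * (m - ⟪a, w⟫) = 0 := by
            apply (Finset.sum_eq_zero_iff_of_nonneg ?_).mp
            · rw [Finset.sum_congr rfl (fun a _ => mul_sub (μ a) m ⟪a, w⟫),
                Finset.sum_sub_distrib, ← Finset.sum_mul, hμ1, one_mul, ← hinner, hvm, sub_self]
            · intro a ha
              have h1 := hμ0 a ha
              have h2 : ⟪a, w⟫ ≤ m := ha0max a ha
              nlinarith
          set t : Finset (EuclideanSpace ℝ (Fin n)) := hA.toFinset.filter (fun a => μ a ≠ 0)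
            with htdef
          have htS : (↑t : Set (EuclideanSpace ℝ (Fin n))) ⊆ S := by
            intro a ha
            rw [htdef, Finset.coe_filter, Set.mem_setOf_eq] at ha
            obtain ⟨haA, haμ⟩ := ha
            refine ⟨hA.mem_toFinset.mp haA, ?_⟩
            have := hzero a haA
            rcases mul_eq_zero.mp this with h | h
            · exact absurd h haμ
            · linarith [sub_eq_zero.mp h]
          have hvt : v ∈ convexHull ℝ (↑t : Set (EuclideanSpace ℝ (Fin n))) := by
            have hcm : t.centerMass μ id = v := by
              rw [htdef]
              rw [show hA.toFinset.filter (fun a => μ a ≠ 0) = {i ∈ hA.toFinset | μ i ≠ 0}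
                from rfl]
              rw [Finset.centerMass_filter_ne_zero]
              exact hμc
            rw [← hcm]
            refine Finset.centerMass_mem_convexHull t
              (fun a ha => hμ0 a (Finset.mem_of_mem_filter a ha)) ?_
              (fun a ha => Finset.mem_coe.mpr ha)
            have : ∑ a ∈ t, μ a = 1 := by
              rw [htdef, Finset.sum_filter_ne_zero, hμ1]
            rw [this]; exact zero_lt_one
          exact convexHull_mono htS hvt
        exact Set.mem_biUnion ⟨fun a ha => ha.1, hSRHS⟩ hvS
      · exact Set.iUnion₂_subset fun S hS => hS.2
    rw [hrep]
    refine Set.Finite.isClosed_biUnion ?_ fun S hS => ?_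
    · exact Set.Finite.subset hA.finite_subsets fun S hS => hS.1
    · exact ((hA.subset hS.1).isCompact_convexHull ℝ).isClosed
  exact ⟨heq ▸ hclosed, heq⟩
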